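/- Let K be a field, μ ∈ K with μ ≠ 0, and n ≥ 1. For each index i with i + 1 < n let M_i be the n×n matrix over K whose (j,j) entry is 1 for j ∉ {i, i+1}, whose (i, i+1) entry is μ, whose (i+1, i) entry is μ⁻¹, and all of whose other entries are 0. Then each M_i squares to the identity (so is a unit of the matrix ring), and the subgroup of units of the n×n matrix ring generated by the M_i is isomorphic, as a group, to the symmetric group Equiv.Perm (Fin n). -/

import Mathlib

/-- The `n×n` monomial matrix over `K` which is the identity except for the `2×2` block
`[[0, μ], [μ⁻¹, 0]]` in rows and columns `i`, `i+1`; the image of the braid group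
generator `σᵢ` under the `F₁ᵐ`-linear representation of the braid group. -/
def braidMatrix (K : Type*) [Field K] (n : ℕ) (μ : K) (i : ℕ) :
    Matrix (Fin n) (Fin n) K :=
  Matrix.of fun j k =>
    if (j : ℕ) = i ∧ (k : ℕ) = i + 1 then μ
    else if (j : ℕ) = i + 1 ∧ (k : ℕ) = i then μ⁻¹
    else if j = k ∧ (j : ℕ) ≠ i ∧ (j : ℕ) ≠ i + 1 then 1
    else 0

namespace BraidAux

variable {K : Type*} [Field K] {n : ℕ}

def A (μ : K) (σ : Equiv.Perm (Fin n)) : Matrix (Fin n) (Fin n) K :=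
  Matrix.of fun j k => if σ k = j then μ ^ (k : ℕ) * (μ ^ (j : ℕ))⁻¹ else 0

lemma A_one {μ : K} (hμ : μ ≠ 0) : A (n := n) μ 1 = 1 := by
  ext j k
  simp only [A, Matrix.of_apply, Equiv.Perm.one_apply, Matrix.one_apply]
  by_cases h : k = j
  · subst h; simp [mul_inv_cancel₀ (pow_ne_zero _ hμ)]
  · simp [h, Ne.symm h]

lemma A_mul {μ : K} (hμ : μ ≠ 0) (σ τ : Equiv.Perm (Fin n)) :
    A μ σ * A μ τ = A μ (σ * τ) := by
  ext j k
  rw [Matrix.mul_apply, Finset.sum_eq_single (τ k)]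
  · simp only [A, Matrix.of_apply, Equiv.Perm.mul_apply, if_pos rfl]
    split_ifs with h
    · have h1 : μ ^ ((τ k : Fin n) : ℕ) ≠ 0 := pow_ne_zero _ hμ
      simp only [h, if_true]
      field_simp
    · simp [h]
  · intro l _ hl
    simp [A, Ne.symm hl]
  · intro h; exact absurd (Finset.mem_univ _) h

def φ {μ : K} (hμ : μ ≠ 0) : Equiv.Perm (Fin n) →* (Matrix (Fin n) (Fin n) K)ˣ where
  toFun σ := ⟨A μ σ, A μ σ⁻¹,
    by rw [A_mul hμ, mul_inv_cancel, A_one hμ],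
    by rw [A_mul hμ, inv_mul_cancel, A_one hμ]⟩
  map_one' := Units.ext (A_one hμ)
  map_mul' σ τ := Units.ext (A_mul hμ σ τ).symm

lemma φ_injective {μ : K} (hμ : μ ≠ 0) :
    Function.Injective (φ (n := n) hμ) := by
  intro σ τ h
  have h' : A μ σ = A μ τ := congrArg Units.val h
  ext k
  by_contra hk
  have := congrFun (congrFun h' (σ k)) k
  simp only [A, Matrix.of_apply] at this
  rw [if_neg (fun h : τ k = σ k => hk (congrArg Fin.val h.symm))] at this
  simp only [if_true] at this
  exact (mul_ne_zero (pow_ne_zero _ hμ) (inv_ne_zero (pow_ne_zero _ hμ))) this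

lemma braid_eq {μ : K} (hμ : μ ≠ 0) {i : ℕ} (h : i + 1 < n) :
    braidMatrix K n μ i = A μ (Equiv.swap ⟨i, by omega⟩ ⟨i + 1, h⟩) := by
  ext j k
  simp only [braidMatrix, A, Matrix.of_apply, Equiv.swap_apply_def, Fin.ext_iff]
  have hk := k.isLt
  have hj := j.isLt
  split_ifs <;> simp -failIfUnchanged only [Fin.val_mk] at * <;>
    first
      | omega
      | (rw [show (k : ℕ) = (j : ℕ) + 1 by omega, pow_succ]; field_simp)
      | (rw [show (j : ℕ) = (k : ℕ) + 1 by omega, pow_succ]; field_simp)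
      | (rw [show (k : ℕ) = (j : ℕ) by omega, mul_inv_cancel₀ (pow_ne_zero _ hμ)])

end BraidAux

/-- Each matrix `Mᵢ = braidMatrix K n μ i` squares to the identity (so is a unit of
the matrix ring), and the subgroup of units of the matrix ring generated by the `Mᵢ`
is isomorphic to the symmetric group `Sₙ`. -/
theorem braidMatrix_generate_symmetricGroup (K : Type*) [Field K] (n : ℕ) (hn : 1 ≤ n)
    (μ : K) (hμ : μ ≠ 0) :
    (∀ i : ℕ, i + 1 < n →
      braidMatrix K n μ i * braidMatrix K n μ i = 1) ∧
    Nonempty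
      ((Subgroup.closure {u : (Matrix (Fin n) (Fin n) K)ˣ |
          ∃ i : ℕ, ∃ _ : i + 1 < n, (u : Matrix (Fin n) (Fin n) K) = braidMatrix K n μ i})
        ≃* Equiv.Perm (Fin n)) := by
  constructor
  · intro i hi
    rw [BraidAux.braid_eq hμ hi, BraidAux.A_mul hμ, Equiv.swap_mul_self, BraidAux.A_one hμ]
  · obtain ⟨m, rfl⟩ : ∃ m, n = m + 1 := ⟨n - 1, by omega⟩
    have hset : {u : (Matrix (Fin (m+1)) (Fin (m+1)) K)ˣ |
          ∃ i : ℕ, ∃ _ : i + 1 < m + 1,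
            (u : Matrix (Fin (m+1)) (Fin (m+1)) K) = braidMatrix K (m+1) μ i}
        = (BraidAux.φ hμ) '' (Set.range fun i : Fin m => Equiv.swap i.castSucc i.succ) := by
      ext u
      constructor
      · rintro ⟨i, hi, hu⟩
        refine ⟨Equiv.swap (⟨i, by omega⟩ : Fin (m+1)) ⟨i+1, hi⟩, ⟨⟨i, by omega⟩, ?_⟩, ?_⟩
        · congr 1
        · exact (Units.ext (by rw [hu, BraidAux.braid_eq hμ hi]; rfl)).symm
      · rintro ⟨σ, ⟨i, rfl⟩, rfl⟩
        refine ⟨(i : ℕ), by omega, ?_⟩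
        rw [BraidAux.braid_eq hμ (show (i : ℕ) + 1 < m + 1 by omega)]
        show BraidAux.A μ _ = BraidAux.A μ _
        congr 2
    rw [hset, ← MonoidHom.map_closure,
      Subgroup.closure_eq_top_of_mclosure_eq_top (Equiv.Perm.mclosure_swap_castSucc_succ m),
      ← MonoidHom.range_eq_map]
    exact ⟨(MonoidHom.ofInjective (BraidAux.φ_injective hμ)).symm⟩
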